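/- In the two-point ambiguity model, let 𝐩 > 1 and let 𝐪 satisfy 1/𝐩 + 1/𝐪 = 1 (so 𝐪 > 1). Define h(x) := ((1 − x^𝐪 p^{1−𝐪}) / (1−p)^{1−𝐪})^{1/𝐪} for x ∈ [0, q₁ᵇ], where q₁ᵇ := p^{1/𝐩}. Then sup { G(q₁, q₂) : q₁, q₂ ≥ 0 and (q₁/p)^𝐪 p + (q₂/(1−p))^𝐪 (1−p) ≤ 1 } = sup { G(q₁, h(q₁)) : 0 ≤ q₁ ≤ q₁ᵇ }, and there exists q₁* ∈ [0, q₁ᵇ] such that (q₁*, h(q₁*)) attains the supremum on the left-hand side; in particular, every feasible (q₁, q₂) satisfies q₁ ≤ q₁ᵇ, and at the optimum the constraint holds with equality. -/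
import Mathlib


open MeasureTheory Real

/-- Density of the `N(0, T·I_d)` distribution on `ℝ^d`. -/
noncomputable def gaussDensity (d : ℕ) (T : ℝ) (z : Fin d → ℝ) : ℝ :=
  (2 * π * T) ^ (-(d : ℝ) / 2) * Real.exp (-(∑ i, z i ^ 2) / (2 * T))

/-- Likelihood factor `L_T(ϑ, z) = exp(⟨z, ϑ⟩ - ½‖ϑ‖²T)`. -/
noncomputable def likelihood (d : ℕ) (T : ℝ) (ϑ z : Fin d → ℝ) : ℝ :=
  Real.exp ((∑ i, z i * ϑ i) - (∑ i, ϑ i ^ 2) * T / 2)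

/-- `G(q₁, q₂) = ∫ (q₁ L_T(ϑ̄, z) + q₂ L_T(ϑ̲, z))^γ φ_T(z) dz`. -/
noncomputable def Gfun (d : ℕ) (T γ : ℝ) (ϑb ϑl : Fin d → ℝ) (q₁ q₂ : ℝ) : ℝ :=
  ∫ z : Fin d → ℝ,
    (q₁ * likelihood d T ϑb z + q₂ * likelihood d T ϑl z) ^ γ * gaussDensity d T z

/-- `h(x) = ((1 - x^Q p^{1-Q}) / (1-p)^{1-Q})^{1/Q}`, solving the dual constraint
`(x/p)^Q p + (h(x)/(1-p))^Q (1-p) = 1` for the second coordinate. -/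
noncomputable def hAdj (p Q x : ℝ) : ℝ :=
  ((1 - x ^ Q * p ^ (1 - Q)) / (1 - p) ^ (1 - Q)) ^ (1 / Q)

lemma gauss_nonneg {d : ℕ} {T : ℝ} (hT : 0 < T) (z : Fin d → ℝ) : 0 ≤ gaussDensity d T z := by
  have : (0:ℝ) ≤ 2 * π * T := by positivity
  exact mul_nonneg (Real.rpow_nonneg this _) (Real.exp_pos _).le

lemma like_pos {d : ℕ} {T : ℝ} (ϑ z : Fin d → ℝ) : 0 < likelihood d T ϑ z := Real.exp_pos _

lemma cont_gauss {d : ℕ} {T : ℝ} : Continuous (gaussDensity d T) := by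
  unfold gaussDensity
  exact continuous_const.mul (Real.continuous_exp.comp
    ((continuous_finset_sum _ fun i _ => (continuous_apply i).pow 2).neg.div_const _))

lemma cont_like {d : ℕ} {T : ℝ} (ϑ : Fin d → ℝ) : Continuous (likelihood d T ϑ) := by
  unfold likelihood
  exact Real.continuous_exp.comp
    ((continuous_finset_sum _ fun i _ => (continuous_apply i).mul continuous_const).sub
      continuous_const)

lemma integ_exp_lin (d : ℕ) {T : ℝ} (hT : 0 < T) (v : Fin d → ℝ) :
    Integrable (fun z : Fin d → ℝ => Real.exp (∑ i, z i * v i) * gaussDensity d T z) := by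
  have h1 : ∀ a : ℝ, Integrable (fun t : ℝ => Real.exp (t * a - t ^ 2 / (2 * T))) := by
    intro a
    have hb : (0:ℝ) < 1 / (2 * T) := by positivity
    have h2 : Integrable (fun t : ℝ => Real.exp (-(1 / (2 * T)) * t ^ 2)) :=
      integrable_exp_neg_mul_sq hb
    have h3 := (h2.comp_sub_right (a * T)).const_mul (Real.exp (a ^ 2 * T / 2))
    refine h3.congr (Filter.Eventually.of_forall fun t => ?_)
    show Real.exp _ * Real.exp _ = Real.exp _
    rw [← Real.exp_add]
    congr 1
    field_simp
    ring
  have heq : (fun z : Fin d → ℝ => Real.exp (∑ i, z i * v i) * gaussDensity d T z)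
      = fun z => (2 * π * T) ^ (-(d : ℝ) / 2) *
          ∏ i, Real.exp (z i * v i - (z i) ^ 2 / (2 * T)) := by
    funext z
    rw [gaussDensity, ← Real.exp_sum, mul_left_comm, ← Real.exp_add]
    congr 2
    rw [Finset.sum_sub_distrib, ← Finset.sum_div]
    ring
  rw [heq]
  exact (Integrable.fintype_prod (f := fun i (t : ℝ) => Real.exp (t * v i - t ^ 2 / (2 * T)))
    fun i => h1 (v i)).const_mul _

lemma crpow {γ : ℝ} (hγ : 0 < γ) : Continuous fun x : ℝ => x ^ γ :=
  continuous_iff_continuousAt.2 fun x => Real.continuousAt_rpow_const x γ (Or.inr hγ.le)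

lemma integ_main (d : ℕ) {T : ℝ} (hT : 0 < T) {γ : ℝ} (hγ : 0 < γ) (ϑb ϑl : Fin d → ℝ)
    {c₁ c₂ : ℝ} (h₁ : 0 ≤ c₁) (h₂ : 0 ≤ c₂) :
    Integrable (fun z : Fin d → ℝ =>
      (c₁ * likelihood d T ϑb z + c₂ * likelihood d T ϑl z) ^ γ * gaussDensity d T z) := by
  set Kb : ℝ := (∑ i, ϑb i ^ 2) * T / 2 with hKb
  set Kl : ℝ := (∑ i, ϑl i ^ 2) * T / 2 with hKl
  set Mb : ℝ := c₁ * Real.exp (-Kb) with hMb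
  set Ml : ℝ := c₂ * Real.exp (-Kl) with hMl
  have hMb0 : 0 ≤ Mb := mul_nonneg h₁ (Real.exp_pos _).le
  have hMl0 : 0 ≤ Ml := mul_nonneg h₂ (Real.exp_pos _).le
  set C : ℝ := Mb + Ml with hC
  have hC0 : 0 ≤ C := add_nonneg hMb0 hMl0
  -- the dominating function
  have hint : Integrable (fun z : Fin d → ℝ =>
      (2 * C) ^ γ * (Real.exp (γ * ∑ i, z i * ϑb i) * gaussDensity d T z
        + Real.exp (γ * ∑ i, z i * ϑl i) * gaussDensity d T z)) := by
    have e1 : ∀ (ϑ : Fin d → ℝ) (z : Fin d → ℝ),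
        Real.exp (γ * ∑ i, z i * ϑ i) = Real.exp (∑ i, z i * (γ * ϑ i)) := by
      intro ϑ z; congr 1; rw [Finset.mul_sum]; exact Finset.sum_congr rfl fun i _ => by ring
    have i1 : Integrable (fun z : Fin d → ℝ =>
        Real.exp (γ * ∑ i, z i * ϑb i) * gaussDensity d T z) := by
      simp only [e1]; exact integ_exp_lin d hT _
    have i2 : Integrable (fun z : Fin d → ℝ =>
        Real.exp (γ * ∑ i, z i * ϑl i) * gaussDensity d T z) := by
      simp only [e1]; exact integ_exp_lin d hT _
    exact (i1.add i2).const_mul _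
  refine hint.mono' ?_ (Filter.Eventually.of_forall fun z => ?_)
  · exact ((crpow hγ).comp ((continuous_const.mul (cont_like ϑb)).add
      (continuous_const.mul (cont_like ϑl)))).mul cont_gauss |>.aestronglyMeasurable
  · set Ab : ℝ := ∑ i, z i * ϑb i with hAb
    set Al : ℝ := ∑ i, z i * ϑl i with hAl
    have hLb : c₁ * likelihood d T ϑb z = Mb * Real.exp Ab := by
      rw [likelihood, hMb, show Ab - Kb = -Kb + Ab by ring, Real.exp_add]; ring
    have hLl : c₂ * likelihood d T ϑl z = Ml * Real.exp Al := by
      rw [likelihood, hMl, show Al - Kl = -Kl + Al by ring, Real.exp_add]; ring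
    have hbase0 : 0 ≤ c₁ * likelihood d T ϑb z + c₂ * likelihood d T ϑl z := by
      have := like_pos (T := T) ϑb z; have := like_pos (T := T) ϑl z; nlinarith
    have hbd : c₁ * likelihood d T ϑb z + c₂ * likelihood d T ϑl z
        ≤ 2 * C * Real.exp (max Ab Al) := by
      rw [hLb, hLl]
      have b1 : Mb * Real.exp Ab ≤ C * Real.exp (max Ab Al) :=
        mul_le_mul (by simp [hC]; linarith) (Real.exp_le_exp.2 (le_max_left _ _))
          (Real.exp_pos _).le hC0
      have b2 : Ml * Real.exp Al ≤ C * Real.exp (max Ab Al) :=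
        mul_le_mul (by simp [hC]; linarith) (Real.exp_le_exp.2 (le_max_right _ _))
          (Real.exp_pos _).le hC0
      linarith
    have hrp : (c₁ * likelihood d T ϑb z + c₂ * likelihood d T ϑl z) ^ γ
        ≤ (2 * C) ^ γ * (Real.exp (γ * Ab) + Real.exp (γ * Al)) := by
      calc (c₁ * likelihood d T ϑb z + c₂ * likelihood d T ϑl z) ^ γ
          ≤ (2 * C * Real.exp (max Ab Al)) ^ γ := Real.rpow_le_rpow hbase0 hbd hγ.le
        _ = (2 * C) ^ γ * (Real.exp (max Ab Al)) ^ γ :=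
            Real.mul_rpow (by linarith) (Real.exp_pos _).le
        _ = (2 * C) ^ γ * Real.exp (max Ab Al * γ) := by rw [Real.exp_mul]
        _ ≤ (2 * C) ^ γ * (Real.exp (γ * Ab) + Real.exp (γ * Al)) := by
            refine mul_le_mul_of_nonneg_left ?_ (Real.rpow_nonneg (by linarith) _)
            rw [max_mul_of_nonneg _ _ hγ.le]
            rcases le_total (Ab * γ) (Al * γ) with h | h
            · rw [max_eq_right h, mul_comm Al γ]
              have := (Real.exp_pos (γ * Ab)).le; linarith
            · rw [max_eq_left h, mul_comm Ab γ]
              have := (Real.exp_pos (γ * Al)).le; linarith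
    have hg := gauss_nonneg hT z
    rw [Real.norm_eq_abs, abs_mul, abs_of_nonneg hg,
      abs_of_nonneg (Real.rpow_nonneg hbase0 _)]
    calc (c₁ * likelihood d T ϑb z + c₂ * likelihood d T ϑl z) ^ γ * gaussDensity d T z
        ≤ (2 * C) ^ γ * (Real.exp (γ * Ab) + Real.exp (γ * Al)) * gaussDensity d T z :=
          mul_le_mul_of_nonneg_right hrp hg
      _ = (2 * C) ^ γ * (Real.exp (γ * Ab) * gaussDensity d T z
            + Real.exp (γ * Al) * gaussDensity d T z) := by ring

lemma G_mono (d : ℕ) {T : ℝ} (hT : 0 < T) {γ : ℝ} (hγ : 0 < γ) (ϑb ϑl : Fin d → ℝ)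
    {q₁ q₂ q₂' : ℝ} (h₁ : 0 ≤ q₁) (h₂ : 0 ≤ q₂) (h : q₂ ≤ q₂') :
    Gfun d T γ ϑb ϑl q₁ q₂ ≤ Gfun d T γ ϑb ϑl q₁ q₂' := by
  unfold Gfun
  refine integral_mono (integ_main d hT hγ ϑb ϑl h₁ h₂)
    (integ_main d hT hγ ϑb ϑl h₁ (h₂.trans h)) fun z => ?_
  refine mul_le_mul_of_nonneg_right ?_ (gauss_nonneg hT z)
  refine Real.rpow_le_rpow ?_ ?_ hγ.le
  · have := like_pos (T := T) ϑb z; have := like_pos (T := T) ϑl z; nlinarith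
  · have := (like_pos (T := T) ϑl z).le; nlinarith

lemma G_cont (d : ℕ) {T : ℝ} (hT : 0 < T) {γ : ℝ} (hγ : 0 < γ) (ϑb ϑl : Fin d → ℝ) :
    Continuous fun q : ℝ × ℝ => Gfun d T γ ϑb ϑl q.1 q.2 := by
  rw [continuous_iff_continuousAt]
  intro q0
  unfold Gfun
  refine continuousAt_of_dominated (bound := fun z =>
      ((|q0.1| + 1) * likelihood d T ϑb z + (|q0.2| + 1) * likelihood d T ϑl z) ^ γ
        * gaussDensity d T z) ?_ ?_ ?_ ?_
  · refine Filter.Eventually.of_forall fun q => ?_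
    exact ((crpow hγ).comp ((continuous_const.mul (cont_like ϑb)).add
      (continuous_const.mul (cont_like ϑl)))).mul cont_gauss |>.aestronglyMeasurable
  · have c1 : ContinuousAt (fun q : ℝ × ℝ => |q.1|) q0 := continuous_fst.abs.continuousAt
    have c2 : ContinuousAt (fun q : ℝ × ℝ => |q.2|) q0 := continuous_snd.abs.continuousAt
    filter_upwards [c1.eventually_lt_const (lt_add_one _),
      c2.eventually_lt_const (lt_add_one _)] with q hq1 hq2
    refine Filter.Eventually.of_forall fun z => ?_
    have hg := gauss_nonneg hT z
    have hLb := (like_pos (T := T) ϑb z).le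
    have hLl := (like_pos (T := T) ϑl z).le
    rw [Real.norm_eq_abs, abs_mul, abs_of_nonneg hg]
    refine mul_le_mul_of_nonneg_right ?_ hg
    calc |(q.1 * likelihood d T ϑb z + q.2 * likelihood d T ϑl z) ^ γ|
        ≤ |q.1 * likelihood d T ϑb z + q.2 * likelihood d T ϑl z| ^ γ :=
          Real.abs_rpow_le_abs_rpow _ _
      _ ≤ ((|q0.1| + 1) * likelihood d T ϑb z + (|q0.2| + 1) * likelihood d T ϑl z) ^ γ := by
          refine Real.rpow_le_rpow (abs_nonneg _) ?_ hγ.le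
          calc |q.1 * likelihood d T ϑb z + q.2 * likelihood d T ϑl z|
              ≤ |q.1| * likelihood d T ϑb z + |q.2| * likelihood d T ϑl z := by
                refine (abs_add_le _ _).trans ?_
                rw [abs_mul, abs_mul, abs_of_nonneg hLb, abs_of_nonneg hLl]
            _ ≤ (|q0.1| + 1) * likelihood d T ϑb z + (|q0.2| + 1) * likelihood d T ϑl z := by
                have := mul_le_mul_of_nonneg_right hq1.le hLb
                have := mul_le_mul_of_nonneg_right hq2.le hLl
                linarith
  · exact integ_main d hT hγ ϑb ϑl (by positivity) (by positivity)
  · refine Filter.Eventually.of_forall fun z => ?_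
    exact (((crpow hγ).comp ((continuous_fst.mul continuous_const).add
      (continuous_snd.mul continuous_const))).mul continuous_const).continuousAt

/-- Adjusted-prior optimization in the ambiguity-loving case `P = λ/α > 1` (conjugate `Q`):
every feasible `(q₁, q₂)` has `q₁ ≤ p^{1/P}`, the supremum of `G` over the feasible set equals
the supremum of `q₁ ↦ G(q₁, h(q₁))` over `[0, p^{1/P}]`, and there is `q₁* ∈ [0, p^{1/P}]`
such that `(q₁*, h(q₁*))` attains the supremum, the constraint holding there with equality. -/
theorem stmt_16 (d : ℕ) (hd : 1 ≤ d) (T : ℝ) (hT : 0 < T) (γ : ℝ) (hγ : 0 < γ)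
    (ϑb ϑl : Fin d → ℝ) (p : ℝ) (hp0 : 0 < p) (hp1 : p < 1)
    (P Q : ℝ) (hP : 1 < P) (hPQ : 1 / P + 1 / Q = 1) :
    (∀ q₁ q₂ : ℝ, 0 ≤ q₁ → 0 ≤ q₂ →
        (q₁ / p) ^ Q * p + (q₂ / (1 - p)) ^ Q * (1 - p) ≤ 1 → q₁ ≤ p ^ (1 / P)) ∧
    sSup {r : ℝ | ∃ q₁ q₂ : ℝ, 0 ≤ q₁ ∧ 0 ≤ q₂ ∧
          (q₁ / p) ^ Q * p + (q₂ / (1 - p)) ^ Q * (1 - p) ≤ 1 ∧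
          r = Gfun d T γ ϑb ϑl q₁ q₂}
      = sSup {r : ℝ | ∃ q₁ : ℝ, 0 ≤ q₁ ∧ q₁ ≤ p ^ (1 / P) ∧
          r = Gfun d T γ ϑb ϑl q₁ (hAdj p Q q₁)} ∧
    ∃ q₁star : ℝ, 0 ≤ q₁star ∧ q₁star ≤ p ^ (1 / P) ∧
      IsGreatest {r : ℝ | ∃ q₁ q₂ : ℝ, 0 ≤ q₁ ∧ 0 ≤ q₂ ∧
          (q₁ / p) ^ Q * p + (q₂ / (1 - p)) ^ Q * (1 - p) ≤ 1 ∧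
          r = Gfun d T γ ϑb ϑl q₁ q₂}
        (Gfun d T γ ϑb ϑl q₁star (hAdj p Q q₁star)) ∧
      (q₁star / p) ^ Q * p + (hAdj p Q q₁star / (1 - p)) ^ Q * (1 - p) = 1 := by
  have hp1' : (0:ℝ) < 1 - p := by linarith
  have hP0 : (0:ℝ) < P := lt_trans one_pos hP
  have h1P : 1 / P < 1 := (div_lt_one hP0).2 hP
  have h1P0 : (0:ℝ) < 1 / P := by positivity
  have hQinv : 1 / Q = 1 - 1 / P := by linarith
  have hQinv_pos : (0:ℝ) < 1 / Q := by rw [hQinv]; linarith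
  have hQ0 : (0:ℝ) < Q := by
    rcases lt_trichotomy Q 0 with h | h | h
    · exfalso; have : 1 / Q < 0 := by exact div_neg_of_pos_of_neg one_pos h
      linarith
    · exfalso; rw [h] at hQinv_pos; simp at hQinv_pos
    · exact h
  have hQne : Q ≠ 0 := ne_of_gt hQ0
  -- key bound: feasibility in one coordinate
  have key : ∀ y c : ℝ, 0 ≤ y → 0 < c → (y / c) ^ Q * c ≤ 1 → y ≤ c ^ (1 / P) := by
    intro y c hy hc h
    have hyc : 0 ≤ y / c := div_nonneg hy hc.le
    have h4 : (y / c) ^ Q ≤ 1 / c := by rw [le_div_iff₀ hc]; exact h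
    have h5 := Real.rpow_le_rpow (Real.rpow_nonneg hyc Q) h4 hQinv_pos.le
    rw [← Real.rpow_mul hyc, mul_one_div_cancel hQne, Real.rpow_one] at h5
    have h6 : y ≤ (1 / c) ^ (1 / Q) * c := (div_le_iff₀ hc).1 h5
    have h7 : (1 / c) ^ (1 / Q) * c = c ^ (1 / P) := by
      have e1 : ((1:ℝ) / c) ^ (1 / Q) = c ^ (-(1 / Q)) := by
        rw [one_div, ← Real.rpow_neg_one c, ← Real.rpow_mul hc.le]; norm_num
      calc (1 / c) ^ (1 / Q) * c = c ^ (-(1 / Q)) * c ^ (1:ℝ) := by rw [e1, Real.rpow_one]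
        _ = c ^ (-(1 / Q) + 1) := (Real.rpow_add hc _ _).symm
        _ = c ^ (1 / P) := by rw [show -(1 / Q) + 1 = 1 / P by linarith]
    rwa [h7] at h6
  have hA : ∀ q₁ q₂ : ℝ, 0 ≤ q₁ → 0 ≤ q₂ →
      (q₁ / p) ^ Q * p + (q₂ / (1 - p)) ^ Q * (1 - p) ≤ 1 → q₁ ≤ p ^ (1 / P) := by
    intro q₁ q₂ h1 h2 h3
    have hnn : 0 ≤ (q₂ / (1 - p)) ^ Q * (1 - p) :=
      mul_nonneg (Real.rpow_nonneg (div_nonneg h2 hp1'.le) _) hp1'.le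
    exact key q₁ p h1 hp0 (by linarith)
  -- constraint term rewriting
  have term_eq : ∀ y c : ℝ, 0 ≤ y → 0 < c → (y / c) ^ Q * c = y ^ Q * c ^ (1 - Q) := by
    intro y c hy hc
    have hcQ : (0:ℝ) < c ^ Q := Real.rpow_pos_of_pos hc Q
    rw [Real.div_rpow hy hc.le, Real.rpow_sub hc, Real.rpow_one]
    field_simp
  have hAle : ∀ x : ℝ, 0 ≤ x → x ≤ p ^ (1 / P) → x ^ Q * p ^ (1 - Q) ≤ 1 := by
    intro x hx hxs
    have h1 : x ^ Q ≤ (p ^ (1 / P)) ^ Q := Real.rpow_le_rpow hx hxs hQ0.le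
    have h2 : (p ^ (1 / P)) ^ Q = p ^ (Q - 1) := by
      rw [← Real.rpow_mul hp0.le]
      congr 1
      have e : 1 / P = 1 - 1 / Q := by linarith
      rw [e, sub_mul, one_mul, one_div, inv_mul_cancel₀ hQne]
    calc x ^ Q * p ^ (1 - Q) ≤ p ^ (Q - 1) * p ^ (1 - Q) :=
          mul_le_mul_of_nonneg_right (h1.trans_eq h2) (Real.rpow_nonneg hp0.le _)
      _ = 1 := by rw [← Real.rpow_add hp0]; norm_num
  have hB : (0:ℝ) < (1 - p) ^ (1 - Q) := Real.rpow_pos_of_pos hp1' _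
  have hbase : ∀ x : ℝ, 0 ≤ x → x ≤ p ^ (1 / P) →
      0 ≤ (1 - x ^ Q * p ^ (1 - Q)) / (1 - p) ^ (1 - Q) := fun x hx hxs =>
    div_nonneg (by linarith [hAle x hx hxs]) hB.le
  have hAdj_nn : ∀ x : ℝ, 0 ≤ x → x ≤ p ^ (1 / P) → 0 ≤ hAdj p Q x := fun x hx hxs =>
    Real.rpow_nonneg (hbase x hx hxs) _
  have hAdjQ : ∀ x : ℝ, 0 ≤ x → x ≤ p ^ (1 / P) →
      (hAdj p Q x) ^ Q = (1 - x ^ Q * p ^ (1 - Q)) / (1 - p) ^ (1 - Q) := by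
    intro x hx hxs
    rw [hAdj, ← Real.rpow_mul (hbase x hx hxs), one_div_mul_cancel hQne, Real.rpow_one]
  have hEq : ∀ x : ℝ, 0 ≤ x → x ≤ p ^ (1 / P) →
      (x / p) ^ Q * p + (hAdj p Q x / (1 - p)) ^ Q * (1 - p) = 1 := by
    intro x hx hxs
    rw [term_eq x p hx hp0, term_eq _ _ (hAdj_nn x hx hxs) hp1', hAdjQ x hx hxs,
      div_mul_cancel₀ _ hB.ne']
    ring
  have hq2le : ∀ q₁ q₂ : ℝ, 0 ≤ q₁ → 0 ≤ q₂ →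
      (q₁ / p) ^ Q * p + (q₂ / (1 - p)) ^ Q * (1 - p) ≤ 1 → q₂ ≤ hAdj p Q q₁ := by
    intro q₁ q₂ h1 h2 h3
    have hs := hA q₁ q₂ h1 h2 h3
    rw [term_eq q₁ p h1 hp0, term_eq q₂ (1 - p) h2 hp1'] at h3
    have h5 : q₂ ^ Q ≤ (hAdj p Q q₁) ^ Q := by
      rw [hAdjQ q₁ h1 hs, le_div_iff₀ hB]; linarith
    have h6 := Real.rpow_le_rpow (Real.rpow_nonneg h2 Q) h5 hQinv_pos.le
    rwa [← Real.rpow_mul h2, ← Real.rpow_mul (hAdj_nn q₁ h1 hs), mul_one_div_cancel hQne,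
      Real.rpow_one, Real.rpow_one] at h6
  -- compactness and existence of maximizer
  set S : Set (ℝ × ℝ) := {q : ℝ × ℝ | 0 ≤ q.1 ∧ 0 ≤ q.2 ∧
    (q.1 / p) ^ Q * p + (q.2 / (1 - p)) ^ Q * (1 - p) ≤ 1} with hS
  have crQ : Continuous fun x : ℝ => x ^ Q := crpow hQ0
  have hSclosed : IsClosed S :=
    (isClosed_le continuous_const continuous_fst).inter
      ((isClosed_le continuous_const continuous_snd).inter
        (isClosed_le (((crQ.comp (continuous_fst.div_const p)).mul continuous_const).add
          ((crQ.comp (continuous_snd.div_const (1 - p))).mul continuous_const))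
          continuous_const))
  have hSsub : S ⊆ Set.Icc ((0:ℝ), (0:ℝ)) (1, 1) := by
    rintro ⟨q₁, q₂⟩ ⟨h1, h2, h3⟩
    have hb1 : q₁ ≤ p ^ (1 / P) := hA q₁ q₂ h1 h2 h3
    have hnn : 0 ≤ (q₁ / p) ^ Q * p :=
      mul_nonneg (Real.rpow_nonneg (div_nonneg h1 hp0.le) _) hp0.le
    have hb2 : q₂ ≤ (1 - p) ^ (1 / P) := key q₂ (1 - p) h2 hp1' (by linarith)
    simp only [Set.mem_Icc, Prod.mk_le_mk]
    refine ⟨⟨h1, h2⟩, hb1.trans (Real.rpow_le_one hp0.le hp1.le h1P0.le),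
      hb2.trans (Real.rpow_le_one hp1'.le (by linarith) h1P0.le)⟩
  have hScomp : IsCompact S := IsCompact.of_isClosed_subset isCompact_Icc hSclosed hSsub
  have hSne : S.Nonempty := by
    refine ⟨(0, 0), le_refl _, le_refl _, ?_⟩
    simp [Real.zero_rpow hQne]
  obtain ⟨q0, hq0S, hq0max⟩ := hScomp.exists_isMaxOn hSne (G_cont d hT hγ ϑb ϑl).continuousOn
  obtain ⟨a, b⟩ := q0
  obtain ⟨ha, hb, hcon⟩ := hq0S
  have has : a ≤ p ^ (1 / P) := hA a b ha hb hcon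
  have hbh : b ≤ hAdj p Q a := hq2le a b ha hb hcon
  have hGab : Gfun d T γ ϑb ϑl a b ≤ Gfun d T γ ϑb ϑl a (hAdj p Q a) :=
    G_mono d hT hγ ϑb ϑl ha hb hbh
  have hfeasah : ((a, hAdj p Q a) : ℝ × ℝ) ∈ S :=
    ⟨ha, hAdj_nn a ha has, (hEq a ha has).le⟩
  have hg1 : IsGreatest {r : ℝ | ∃ q₁ q₂ : ℝ, 0 ≤ q₁ ∧ 0 ≤ q₂ ∧
      (q₁ / p) ^ Q * p + (q₂ / (1 - p)) ^ Q * (1 - p) ≤ 1 ∧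
      r = Gfun d T γ ϑb ϑl q₁ q₂} (Gfun d T γ ϑb ϑl a (hAdj p Q a)) := by
    constructor
    · exact ⟨a, hAdj p Q a, ha, hAdj_nn a ha has, (hEq a ha has).le, rfl⟩
    · rintro r ⟨q₁, q₂, h1, h2, h3, rfl⟩
      exact (hq0max (⟨h1, h2, h3⟩ : ((q₁, q₂) : ℝ × ℝ) ∈ S)).trans hGab
  have hg2 : IsGreatest {r : ℝ | ∃ q₁ : ℝ, 0 ≤ q₁ ∧ q₁ ≤ p ^ (1 / P) ∧
      r = Gfun d T γ ϑb ϑl q₁ (hAdj p Q q₁)} (Gfun d T γ ϑb ϑl a (hAdj p Q a)) := by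
    constructor
    · exact ⟨a, ha, has, rfl⟩
    · rintro r ⟨q₁, h1, h1s, rfl⟩
      exact hg1.2 ⟨q₁, hAdj p Q q₁, h1, hAdj_nn q₁ h1 h1s, (hEq q₁ h1 h1s).le, rfl⟩
  exact ⟨hA, by rw [hg1.csSup_eq, hg2.csSup_eq], a, ha, has, hg1, hEq a ha has⟩
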